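/- For each t > 0 let f_t be a positive Borel measure on (0,∞) such that ∫_{(0,∞)} (1 − e^{−λx}) f_t(dx) = √λ · tanh(√λ · t) for every λ > 0. Then as t → ∞, f_t converges weakly-* to the stationary constant flux solution: for every continuous compactly supported φ : (0,∞) → ℝ, ∫ φ(x) f_t(dx) → (1/(2√π)) ∫_0^∞ φ(x) x^{−3/2} dx. -/

import Mathlib

open MeasureTheory Set ENNReal Real Filter

lemma my_tanh_eq (x : ℝ) :
    Real.tanh x = (1 - Real.exp (-(2*x))) / (1 + Real.exp (-(2*x))) := by
  have h1 : Real.exp (-(2*x)) = Real.exp (-x) * Real.exp (-x) := by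
    rw [← Real.exp_add]; ring_nf
  have h2 : Real.exp x * Real.exp (-x) = 1 := by
    rw [← Real.exp_add]; simp
  have h3 : Real.cosh x ≠ 0 := ne_of_gt (Real.cosh_pos x)
  have h4 : (1:ℝ) + Real.exp (-(2*x)) ≠ 0 := by positivity
  rw [Real.tanh_eq_sinh_div_cosh, Real.sinh_eq, Real.cosh_eq] at *
  field_simp at *
  nlinarith [Real.exp_pos x, Real.exp_pos (-x)]

lemma my_tanh_le_one (x : ℝ) : Real.tanh x ≤ 1 := by
  rw [my_tanh_eq]
  have h := Real.exp_pos (-(2*x))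
  rw [div_le_one (by positivity)]
  linarith

lemma my_tanh_nonneg {x : ℝ} (hx : 0 ≤ x) : 0 ≤ Real.tanh x := by
  rw [my_tanh_eq]
  have h : Real.exp (-(2*x)) ≤ 1 := by
    rw [Real.exp_le_one_iff]; linarith
  have h2 := Real.exp_pos (-(2*x))
  apply div_nonneg <;> linarith

lemma my_tendsto_tanh : Tendsto Real.tanh atTop (nhds 1) := by
  have h1 : Tendsto (fun x : ℝ => Real.exp (-(2*x))) atTop (nhds 0) := by
    apply Real.tendsto_exp_atBot.comp
    exact Filter.tendsto_neg_atTop_atBot.comp (tendsto_id.const_mul_atTop two_pos)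
  have : Tendsto (fun x : ℝ => (1 - Real.exp (-(2*x))) / (1 + Real.exp (-(2*x)))) atTop
      (nhds ((1-0)/(1+0))) := by
    apply Tendsto.div ((tendsto_const_nhds).sub h1) ((tendsto_const_nhds).add h1) (by norm_num)
  simp only [sub_zero, add_zero, div_one] at this
  exact this.congr (fun x => (my_tanh_eq x).symm)

lemma my_half_integrable {s : ℝ} (hs : 0 < s) :
    IntegrableOn (fun x : ℝ => x ^ (-(1:ℝ)/2) * Real.exp (-(s*x))) (Ioi 0) := by
  have hg : IntegrableOn (fun x : ℝ => Real.exp (-x) * x ^ ((1:ℝ)/2 - 1)) (Ioi 0) :=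
    Real.GammaIntegral_convergent (by norm_num)
  have := (integrableOn_Ioi_comp_mul_left_iff
      (fun x : ℝ => Real.exp (-x) * x ^ ((1:ℝ)/2 - 1)) 0 hs).mpr (by simpa using hg)
  have heq : ∀ x ∈ Ioi (0:ℝ),
      Real.exp (-(s*x)) * (s*x) ^ ((1:ℝ)/2 - 1)
        = s ^ (-(1:ℝ)/2) * (x ^ (-(1:ℝ)/2) * Real.exp (-(s*x))) := by
    intro x hx
    rw [Real.mul_rpow hs.le (le_of_lt hx)]
    have : (1:ℝ)/2 - 1 = -(1:ℝ)/2 := by norm_num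
    rw [this]; ring
  have h2 : IntegrableOn (fun x : ℝ =>
      s ^ (-(1:ℝ)/2) * (x ^ (-(1:ℝ)/2) * Real.exp (-(s*x)))) (Ioi 0) := by
    exact this.congr_fun heq measurableSet_Ioi
  have h3 : IntegrableOn (fun x : ℝ =>
      (s ^ (-(1:ℝ)/2))⁻¹ * (s ^ (-(1:ℝ)/2) * (x ^ (-(1:ℝ)/2) * Real.exp (-(s*x))))) (Ioi 0) :=
    h2.const_mul (s ^ (-(1:ℝ)/2))⁻¹
  refine h3.congr_fun (fun x hx => ?_) measurableSet_Ioi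
  have hsne : s ^ (-(1:ℝ)/2) ≠ 0 := by
    positivity
  field_simp

lemma my_half_integral {s : ℝ} (hs : 0 < s) :
    ∫ x in Ioi (0:ℝ), x ^ (-(1:ℝ)/2) * Real.exp (-(s*x)) = Real.sqrt π / Real.sqrt s := by
  have h := integral_rpow_mul_exp_neg_mul_Ioi (a := (1:ℝ)/2) (r := s) (by norm_num) hs
  have heq : ∀ x ∈ Ioi (0:ℝ), x ^ ((1:ℝ)/2 - 1) * Real.exp (-(s*x))
      = x ^ (-(1:ℝ)/2) * Real.exp (-(s*x)) := by
    intro x _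
    norm_num
  rw [setIntegral_congr_fun measurableSet_Ioi heq] at h
  rw [h, Real.Gamma_one_half_eq, ← Real.sqrt_eq_rpow, one_div, Real.sqrt_inv]
  ring

lemma my_inner_eq {l x : ℝ} (hl : 0 < l) (hx : 0 < x) :
    (1 - Real.exp (-(l*x))) * x ^ (-(3:ℝ)/2)
      = ∫ s in Ioc (0:ℝ) l, x ^ (-(1:ℝ)/2) * Real.exp (-(s*x)) := by
  have hder : ∀ s ∈ uIcc (0:ℝ) l,
      HasDerivAt (fun u => -(x⁻¹) * Real.exp (-(u*x))) (Real.exp (-(s*x))) s := by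
    intro s _
    have h1 : HasDerivAt (fun u : ℝ => -(u*x)) (-x) s := by
      have h0 := ((hasDerivAt_id s).mul_const x).neg
      simp only [id, one_mul] at h0
      exact h0
    have h2 := (h1.exp).const_mul (-(x⁻¹))
    refine h2.congr_deriv ?_
    rw [show -x⁻¹ * (Real.exp (-(s*x)) * -x) = (x⁻¹ * x) * Real.exp (-(s*x)) by ring,
      inv_mul_cancel₀ hx.ne', one_mul]
  have hcont : IntervalIntegrable (fun s => Real.exp (-(s*x))) volume 0 l :=
    (Real.continuous_exp.comp ((continuous_id.mul continuous_const).neg)).intervalIntegrable 0 l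
  have hval : ∫ s in (0:ℝ)..l, Real.exp (-(s*x))
      = -(x⁻¹) * Real.exp (-(l*x)) - (-(x⁻¹) * Real.exp (-(0*x))) :=
    intervalIntegral.integral_eq_sub_of_hasDerivAt hder hcont
  have hset : ∫ s in Ioc (0:ℝ) l, x ^ (-(1:ℝ)/2) * Real.exp (-(s*x))
      = x ^ (-(1:ℝ)/2) * ∫ s in (0:ℝ)..l, Real.exp (-(s*x)) := by
    rw [intervalIntegral.integral_of_le hl.le, ← integral_const_mul]
  rw [hset, hval]
  have hx32 : x ^ (-(3:ℝ)/2) = x ^ (-(1:ℝ)/2) * x⁻¹ := by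
    rw [← Real.rpow_neg_one x, ← Real.rpow_add hx]
    norm_num
  rw [hx32]
  simp only [zero_mul, neg_zero, Real.exp_zero]
  ring

lemma my_key {l : ℝ} (hl : 0 < l) :
    ∫⁻ x in Ioi (0:ℝ), ENNReal.ofReal ((1 - Real.exp (-(l*x))) * x ^ (-(3:ℝ)/2))
      = ENNReal.ofReal (2 * Real.sqrt π * Real.sqrt l) := by
  -- replace integrand by double lintegral
  have step1 : ∀ x ∈ Ioi (0:ℝ),
      ENNReal.ofReal ((1 - Real.exp (-(l*x))) * x ^ (-(3:ℝ)/2))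
        = ∫⁻ s in Ioc (0:ℝ) l, ENNReal.ofReal (x ^ (-(1:ℝ)/2) * Real.exp (-(s*x))) := by
    intro x hx
    rw [my_inner_eq hl hx]
    rw [ofReal_integral_eq_lintegral_ofReal]
    · exact ((continuous_const.mul
        (Real.continuous_exp.comp ((continuous_id.mul continuous_const).neg))).integrableOn_Ioc)
    · filter_upwards [ae_restrict_mem measurableSet_Ioc] with s hs
      have := Real.rpow_nonneg (le_of_lt hx) (-(1:ℝ)/2)
      positivity
  rw [setLIntegral_congr_fun measurableSet_Ioi step1]
  -- swap
  have hmeas : AEMeasurable (fun p : ℝ × ℝ =>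
      ENNReal.ofReal (p.1 ^ (-(1:ℝ)/2) * Real.exp (-(p.2*p.1))))
      ((volume.restrict (Ioi (0:ℝ))).prod (volume.restrict (Ioc (0:ℝ) l))) := by
    apply Measurable.aemeasurable
    apply ENNReal.measurable_ofReal.comp
    exact ((measurable_fst.pow measurable_const).mul
      ((measurable_snd.mul measurable_fst).neg.exp))
  rw [lintegral_lintegral_swap hmeas]
  -- inner integral
  have step2 : ∀ s ∈ Ioc (0:ℝ) l,
      (∫⁻ x in Ioi (0:ℝ), ENNReal.ofReal (x ^ (-(1:ℝ)/2) * Real.exp (-(s*x))))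
        = ENNReal.ofReal (Real.sqrt π / Real.sqrt s) := by
    intro s hs
    rw [← my_half_integral hs.1, ofReal_integral_eq_lintegral_ofReal (my_half_integrable hs.1)]
    filter_upwards [ae_restrict_mem measurableSet_Ioi] with x hx
    have := Real.rpow_nonneg (le_of_lt hx) (-(1:ℝ)/2)
    positivity
  rw [setLIntegral_congr_fun measurableSet_Ioc step2]
  -- outer integral
  have hint : IntegrableOn (fun s : ℝ => Real.sqrt π / Real.sqrt s) (Ioc 0 l) := by
    have h0 : IntervalIntegrable (fun s : ℝ => Real.sqrt π * s ^ (-(1:ℝ)/2)) volume 0 l :=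
      (intervalIntegral.intervalIntegrable_rpow' (by norm_num)).const_mul _
    rw [intervalIntegrable_iff_integrableOn_Ioc_of_le hl.le] at h0
    refine h0.congr_fun (fun s hs => ?_) measurableSet_Ioc
    dsimp only
    rw [show (-1:ℝ)/2 = -(1/2) by norm_num, Real.rpow_neg hs.1.le, ← Real.sqrt_eq_rpow,
      div_eq_mul_inv]
  rw [← ofReal_integral_eq_lintegral_ofReal hint]
  · congr 1
    have hval : ∫ s in Ioc (0:ℝ) l, Real.sqrt π / Real.sqrt s
        = Real.sqrt π * ∫ s in (0:ℝ)..l, s ^ (-(1:ℝ)/2) := by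
      rw [intervalIntegral.integral_of_le hl.le, ← integral_const_mul]
      refine setIntegral_congr_fun measurableSet_Ioc (fun s hs => ?_)
      rw [show (-1:ℝ)/2 = -(1/2) by norm_num, Real.rpow_neg hs.1.le, ← Real.sqrt_eq_rpow,
        div_eq_mul_inv]
    rw [hval, integral_rpow (Or.inl (by norm_num))]
    rw [Real.sqrt_eq_rpow l]
    rw [Real.zero_rpow (by norm_num)]
    norm_num
    ring
  · filter_upwards [ae_restrict_mem measurableSet_Ioc] with s hs
    have h1 : 0 < Real.sqrt s := Real.sqrt_pos.mpr hs.1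
    positivity

lemma my_integrable_of_bound (μ : Measure ℝ) (m : ℝ)
    (hfin : ∫⁻ x in Ioi (0:ℝ), ENNReal.ofReal (1 - Real.exp (-x)) ∂μ = ENNReal.ofReal m)
    (ψ : ℝ → ℝ) (hψ : Continuous ψ) (C : ℝ) (hC : 0 ≤ C)
    (hb : ∀ x ∈ Ioi (0:ℝ), |ψ x| ≤ C * (1 - Real.exp (-x))) :
    IntegrableOn ψ (Ioi 0) μ := by
  refine ⟨hψ.aestronglyMeasurable, ?_⟩
  rw [hasFiniteIntegral_iff_norm]
  calc ∫⁻ x in Ioi (0:ℝ), ENNReal.ofReal ‖ψ x‖ ∂μ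
      ≤ ∫⁻ x in Ioi (0:ℝ), ENNReal.ofReal C * ENNReal.ofReal (1 - Real.exp (-x)) ∂μ := by
        refine lintegral_mono_ae ?_
        filter_upwards [ae_restrict_mem measurableSet_Ioi] with x hx
        rw [← ENNReal.ofReal_mul hC]
        exact ENNReal.ofReal_le_ofReal ((Real.norm_eq_abs _) ▸ hb x hx)
    _ = ENNReal.ofReal C * ENNReal.ofReal m := by
        rw [lintegral_const_mul _ (by fun_prop), hfin]
    _ < ⊤ := by finiteness

lemma my_moments (μ : Measure ℝ) (G : ℝ → ℝ)
    (hG0 : ∀ l : ℝ, 0 ≤ l → 0 ≤ G l)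
    (hG : ∀ l : ℝ, 0 ≤ l →
      ∫⁻ x in Ioi (0:ℝ), ENNReal.ofReal (1 - Real.exp (-(l * x))) ∂μ = ENNReal.ofReal (G l))
    (k : ℕ) :
    IntegrableOn (fun x => Real.exp (-(k * x)) * (1 - Real.exp (-x))) (Ioi 0) μ ∧
      ∫ x in Ioi (0:ℝ), Real.exp (-(k * x)) * (1 - Real.exp (-x)) ∂μ
        = G ((k:ℝ)+1) - G k := by
  have hk : (0:ℝ) ≤ k := Nat.cast_nonneg k
  have hk1 : (0:ℝ) ≤ (k:ℝ)+1 := by linarith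
  -- pointwise splitting
  have hpt : ∀ x ∈ Ioi (0:ℝ),
      ENNReal.ofReal (1 - Real.exp (-(((k:ℝ)+1) * x)))
        = ENNReal.ofReal (Real.exp (-(k * x)) * (1 - Real.exp (-x)))
          + ENNReal.ofReal (1 - Real.exp (-((k:ℝ) * x))) := by
    intro x hx
    have hx0 : (0:ℝ) < x := hx
    have h1 : Real.exp (-((k:ℝ) * x)) ≤ 1 := Real.exp_le_one_iff.mpr (by nlinarith)
    have h2 : Real.exp (-x) ≤ 1 := Real.exp_le_one_iff.mpr (by linarith)
    have h3 : (0:ℝ) ≤ Real.exp (-(k * x)) * (1 - Real.exp (-x)) := by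
      have := Real.exp_pos (-((k:ℝ) * x)); nlinarith
    rw [← ENNReal.ofReal_add h3 (by linarith)]
    congr 1
    have : Real.exp (-(((k:ℝ)+1) * x)) = Real.exp (-(k*x)) * Real.exp (-x) := by
      rw [← Real.exp_add]; ring_nf
    rw [this]; ring
  have hmeask : Measurable fun x : ℝ => ENNReal.ofReal (1 - Real.exp (-((k:ℝ) * x))) := by
    fun_prop
  have hsplit : (∫⁻ x in Ioi (0:ℝ),
        ENNReal.ofReal (Real.exp (-(k * x)) * (1 - Real.exp (-x))) ∂μ)
      + ENNReal.ofReal (G k) = ENNReal.ofReal (G ((k:ℝ)+1)) := by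
    rw [← hG k hk, ← hG _ hk1,
      setLIntegral_congr_fun measurableSet_Ioi hpt]
    rw [lintegral_add_right _ hmeask]
  have hle : ENNReal.ofReal (G k) ≤ ENNReal.ofReal (G ((k:ℝ)+1)) := by
    rw [← hsplit]; exact le_add_self
  have hGle : G k ≤ G ((k:ℝ)+1) :=
    (ENNReal.ofReal_le_ofReal_iff (hG0 _ hk1)).mp hle
  have hlint : (∫⁻ x in Ioi (0:ℝ),
        ENNReal.ofReal (Real.exp (-(k * x)) * (1 - Real.exp (-x))) ∂μ)
      = ENNReal.ofReal (G ((k:ℝ)+1) - G k) := by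
    rw [ENNReal.ofReal_sub _ (hG0 k hk)]
    exact ENNReal.eq_sub_of_add_eq (by finiteness) hsplit
  -- integrability
  have hcont : Continuous fun x : ℝ => Real.exp (-(k * x)) * (1 - Real.exp (-x)) := by
    fun_prop
  have hnn : ∀ x ∈ Ioi (0:ℝ), 0 ≤ Real.exp (-(k * x)) * (1 - Real.exp (-x)) := by
    intro x hx
    have hx0 : (0:ℝ) < x := hx
    have h2 : Real.exp (-x) ≤ 1 := Real.exp_le_one_iff.mpr (by linarith)
    have := Real.exp_pos (-((k:ℝ) * x)); nlinarith
  have hint : IntegrableOn (fun x => Real.exp (-(k * x)) * (1 - Real.exp (-x))) (Ioi 0) μ := by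
    refine ⟨hcont.aestronglyMeasurable, ?_⟩
    rw [hasFiniteIntegral_iff_norm]
    have : ∀ x ∈ Ioi (0:ℝ), ENNReal.ofReal ‖Real.exp (-(k * x)) * (1 - Real.exp (-x))‖
        = ENNReal.ofReal (Real.exp (-(k * x)) * (1 - Real.exp (-x))) := by
      intro x hx
      rw [Real.norm_eq_abs, abs_of_nonneg (hnn x hx)]
    rw [setLIntegral_congr_fun measurableSet_Ioi this, hlint]
    finiteness
  refine ⟨hint, ?_⟩
  rw [integral_eq_lintegral_of_nonneg_ae ?_ hcont.aestronglyMeasurable]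
  · rw [hlint, ENNReal.toReal_ofReal (by linarith)]
  · filter_upwards [ae_restrict_mem measurableSet_Ioi] with x hx using hnn x hx

noncomputable def myW : ℝ → NNReal :=
  fun x => Real.toNNReal ((2 * Real.sqrt π)⁻¹ * x ^ (-(3:ℝ)/2))

lemma myW_meas : Measurable myW :=
  measurable_real_toNNReal.comp ((measurable_id.pow measurable_const).const_mul _)

noncomputable def myMu : Measure ℝ :=
  ((volume : Measure ℝ).restrict (Ioi 0)).withDensity (fun x => (myW x : ℝ≥0∞))

lemma myMu_setLIntegral (g : ℝ → ℝ≥0∞) (hg : Measurable g) :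
    ∫⁻ x in Ioi (0:ℝ), g x ∂myMu
      = ∫⁻ x in Ioi (0:ℝ), (ENNReal.ofReal ((2 * Real.sqrt π)⁻¹ * x ^ (-(3:ℝ)/2))) * g x := by
  rw [myMu, restrict_withDensity measurableSet_Ioi,
    Measure.restrict_restrict measurableSet_Ioi, Set.inter_self,
    lintegral_withDensity_eq_lintegral_mul _ (myW_meas.coe_nnreal_ennreal) hg]
  rfl

lemma myMu_bernstein (l : ℝ) (hl : 0 ≤ l) :
    ∫⁻ x in Ioi (0:ℝ), ENNReal.ofReal (1 - Real.exp (-(l * x))) ∂myMu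
      = ENNReal.ofReal (Real.sqrt l) := by
  rw [myMu_setLIntegral _ (by fun_prop)]
  rcases eq_or_lt_of_le hl with rfl | hl
  · simp
  have hπ : (0:ℝ) < Real.sqrt π := Real.sqrt_pos.mpr Real.pi_pos
  have hc : (0:ℝ) ≤ (2 * Real.sqrt π)⁻¹ := by positivity
  have hpt : ∀ x ∈ Ioi (0:ℝ),
      (ENNReal.ofReal ((2 * Real.sqrt π)⁻¹ * x ^ (-(3:ℝ)/2)))
          * ENNReal.ofReal (1 - Real.exp (-(l * x)))
        = ENNReal.ofReal ((2 * Real.sqrt π)⁻¹)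
          * ENNReal.ofReal ((1 - Real.exp (-(l * x))) * x ^ (-(3:ℝ)/2)) := by
    intro x hx
    have hx0 : (0:ℝ) < x := hx
    have h1 : (0:ℝ) ≤ 1 - Real.exp (-(l * x)) := by
      have : Real.exp (-(l*x)) ≤ 1 := Real.exp_le_one_iff.mpr (by nlinarith)
      linarith
    rw [← ENNReal.ofReal_mul (show (0:ℝ) ≤ (2*Real.sqrt π)⁻¹ * x ^ (-(3:ℝ)/2) by positivity),
      ← ENNReal.ofReal_mul hc]
    congr 1
    ring
  rw [setLIntegral_congr_fun measurableSet_Ioi hpt,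
    lintegral_const_mul _ (by fun_prop), my_key hl,
    ← ENNReal.ofReal_mul hc]
  congr 1
  have : (2 * Real.sqrt π)⁻¹ * (2 * Real.sqrt π * Real.sqrt l)
      = ((2 * Real.sqrt π)⁻¹ * (2 * Real.sqrt π)) * Real.sqrt l := by ring
  rw [this, inv_mul_cancel₀ (by positivity), one_mul]

lemma myMu_integral (ψ : ℝ → ℝ) :
    ∫ x in Ioi (0:ℝ), ψ x ∂myMu
      = ∫ x in Ioi (0:ℝ), ((2 * Real.sqrt π)⁻¹ * x ^ (-(3:ℝ)/2)) * ψ x := by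
  have h1 : myMu.restrict (Ioi 0)
      = ((volume : Measure ℝ).restrict (Ioi 0)).withDensity (fun x => (myW x : ℝ≥0∞)) := by
    rw [myMu, ← restrict_withDensity measurableSet_Ioi,
      Measure.restrict_restrict measurableSet_Ioi, Set.inter_self]
  have h2 : ∫ x in Ioi (0:ℝ), ψ x ∂myMu
      = ∫ x, ψ x ∂(((volume : Measure ℝ).restrict (Ioi 0)).withDensity
          (fun x => (myW x : ℝ≥0∞))) := by
    rw [← h1]
  rw [h2, integral_withDensity_eq_integral_smul myW_meas]
  refine setIntegral_congr_fun measurableSet_Ioi (fun x hx => ?_)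
  have hx0 : (0:ℝ) < x := hx
  have hnn : (0:ℝ) ≤ (2 * Real.sqrt π)⁻¹ * x ^ (-(3:ℝ)/2) := by positivity
  rw [NNReal.smul_def, myW, Real.coe_toNNReal _ hnn, smul_eq_mul]

lemma my_h_cont {φ : ℝ → ℝ} (hφc : Continuous φ) {a A : ℝ} (ha : 0 < a)
    (h0 : ∀ x : ℝ, x < a → φ x = 0) (h1 : ∀ x : ℝ, A < x → φ x = 0) :
    ContinuousOn (fun y => φ (-Real.log y) / (1 - y)) (Icc 0 1) := by
  intro y hy
  by_cases hyA : y < Real.exp (-A)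
  · have hz : ∀ z ∈ Icc (0:ℝ) 1 ∩ Iio (Real.exp (-A)),
        φ (-Real.log z) / (1 - z) = 0 := by
      rintro z ⟨hz1, hz2⟩
      rcases eq_or_lt_of_le hz1.1 with rfl | hz0
      · simp [Real.log_zero, h0 0 ha]
      · have : Real.log z < -A := (Real.log_lt_iff_lt_exp hz0).mpr hz2
        rw [h1 (-Real.log z) (by linarith), zero_div]
    have := (continuousWithinAt_const (b := (0:ℝ))).congr hz (hz y ⟨hy, hyA⟩)
    exact (continuousWithinAt_inter (isOpen_Iio.mem_nhds hyA)).mp this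
  · by_cases hya : Real.exp (-a) < y
    · have hz : ∀ z ∈ Icc (0:ℝ) 1 ∩ Ioi (Real.exp (-a)),
          φ (-Real.log z) / (1 - z) = 0 := by
        rintro z ⟨hz1, hz2⟩
        have hz0 : (0:ℝ) < z := lt_trans (Real.exp_pos _) hz2
        have : -a < Real.log z := (Real.lt_log_iff_exp_lt hz0).mpr hz2
        rw [h0 (-Real.log z) (by linarith), zero_div]
      have := (continuousWithinAt_const (b := (0:ℝ))).congr hz (hz y ⟨hy, hya⟩)
      exact (continuousWithinAt_inter (isOpen_Ioi.mem_nhds hya)).mp this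
    · push_neg at hyA hya
      have hy0 : (0:ℝ) < y := lt_of_lt_of_le (Real.exp_pos _) hyA
      have hy1 : y < 1 := lt_of_le_of_lt hya (Real.exp_lt_one_iff.mpr (by linarith))
      apply ContinuousAt.continuousWithinAt
      apply ContinuousAt.div
      · exact (hφc.continuousAt).comp ((Real.continuousAt_log (ne_of_gt hy0)).neg)
      · exact (continuous_const.sub continuous_id).continuousAt
      · intro hcontra
        have : y = 1 := by linarith [sub_eq_zero.mp hcontra]
        linarith

/-- Proposition 6.13 of the paper: if each `f_t` (`t > 0`)
is a positive Borel measure on `(0,∞)` with Bernstein transform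
`√λ·tanh(√λ·t)`, then as `t → ∞` the measures `f_t` converge weakly-* to the
stationary constant flux solution `(1/(2√π)) x^{-3/2} dx`: for every continuous
compactly supported `φ : (0,∞) → ℝ`,
`∫ φ(x) f_t(dx) → (1/(2√π)) ∫_0^∞ φ(x) x^{-3/2} dx`. -/
theorem convergence_to_stationary_constant_kernel
    (f : ℝ → Measure ℝ)
    (hbern : ∀ t > (0:ℝ), ∀ l > (0:ℝ),
      (∫⁻ x in Ioi (0:ℝ), ENNReal.ofReal (1 - Real.exp (-(l * x))) ∂(f t))
        = ENNReal.ofReal (Real.sqrt l * Real.tanh (Real.sqrt l * t))) :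
    ∀ φ : ℝ → ℝ, Continuous φ → HasCompactSupport φ → tsupport φ ⊆ Ioi 0 →
      Filter.Tendsto (fun t => ∫ x in Ioi (0:ℝ), φ x ∂(f t)) Filter.atTop
        (nhds (1 / (2 * Real.sqrt π)
          * ∫ x in Ioi (0:ℝ), φ x * x ^ (-(3:ℝ) / 2))) := by
  intro φ hφc hφs hφsupp
  by_cases hne : (tsupport φ).Nonempty
  swap
  · have hz : φ = 0 := by
      rwa [not_nonempty_iff_eq_empty, tsupport_eq_empty_iff] at hne
    simp only [hz, Pi.zero_apply, integral_zero, zero_mul, mul_zero]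
    exact tendsto_const_nhds
  -- support bounds
  have hK : IsCompact (tsupport φ) := hφs
  set a : ℝ := sInf (tsupport φ) with ha_def
  set A : ℝ := sSup (tsupport φ) with hA_def
  have ha : 0 < a := hφsupp (hK.sInf_mem hne)
  have hlow : ∀ x : ℝ, x < a → φ x = 0 := by
    intro x hx
    apply image_eq_zero_of_notMem_tsupport
    intro hmem
    exact absurd (csInf_le hK.bddBelow hmem) (not_le.mpr hx)
  have hup : ∀ x : ℝ, A < x → φ x = 0 := by
    intro x hx
    apply image_eq_zero_of_notMem_tsupport
    intro hmem
    exact absurd (le_csSup hK.bddAbove hmem) (not_le.mpr hx)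
  set h : ℝ → ℝ := fun y => φ (-Real.log y) / (1 - y) with hh_def
  have hcont : ContinuousOn h (Icc 0 1) := my_h_cont hφc ha hlow hup
  obtain ⟨C, hC⟩ := isCompact_Icc.exists_bound_of_continuousOn hcont
  have hC0 : 0 ≤ C := le_trans (norm_nonneg _) (hC 0 ⟨le_refl _, zero_le_one⟩)
  have h_id : ∀ x ∈ Ioi (0:ℝ), φ x = h (Real.exp (-x)) * (1 - Real.exp (-x)) := by
    intro x hx
    have hx0 : (0:ℝ) < x := hx
    have hne1 : 1 - Real.exp (-x) ≠ 0 := by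
      have : Real.exp (-x) < 1 := Real.exp_lt_one_iff.mpr (by linarith)
      intro hc; rw [sub_eq_zero] at hc; linarith [hc.symm]
    simp only [hh_def, Real.log_exp, neg_neg]
    rw [div_mul_cancel₀ _ hne1]
  have hmemIcc : ∀ x ∈ Ioi (0:ℝ), Real.exp (-x) ∈ Icc (0:ℝ) 1 := by
    intro x hx
    exact ⟨(Real.exp_pos _).le, Real.exp_le_one_iff.mpr (by simp; exact le_of_lt hx)⟩
  have hpb : ∀ x ∈ Ioi (0:ℝ), |φ x| ≤ C * (1 - Real.exp (-x)) := by
    intro x hx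
    have h1 : 0 ≤ 1 - Real.exp (-x) := by
      have := Real.exp_le_one_iff.mpr (show -x ≤ 0 by simp; exact le_of_lt hx); linarith
    rw [h_id x hx, abs_mul, abs_of_nonneg h1]
    exact mul_le_mul_of_nonneg_right
      ((Real.norm_eq_abs _) ▸ hC _ (hmemIcc x hx)) h1
  -- Bernstein transform of f t for all l ≥ 0
  have hGt : ∀ t : ℝ, 0 < t → ∀ l : ℝ, 0 ≤ l →
      (∫⁻ x in Ioi (0:ℝ), ENNReal.ofReal (1 - Real.exp (-(l * x))) ∂(f t))
        = ENNReal.ofReal (Real.sqrt l * Real.tanh (Real.sqrt l * t)) := by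
    intro t ht l hl
    rcases eq_or_lt_of_le hl with rfl | hl
    · simp
    · exact hbern t ht l hl
  have hGt0 : ∀ t : ℝ, 0 < t → ∀ l : ℝ, 0 ≤ l →
      0 ≤ Real.sqrt l * Real.tanh (Real.sqrt l * t) :=
    fun t ht l _ => mul_nonneg (Real.sqrt_nonneg l)
      (my_tanh_nonneg (mul_nonneg (Real.sqrt_nonneg l) ht.le))
  -- main ε argument
  rw [Metric.tendsto_nhds]
  intro ε hε
  set δ : ℝ := ε/4 with hδ_def
  have hδ : 0 < δ := by positivity
  -- Weierstrass approximation
  set f₀ : C(Icc (0:ℝ) 1, ℝ) := ⟨(Icc (0:ℝ) 1).restrict h, hcont.restrict⟩ with hf₀_def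
  obtain ⟨p, hp⟩ := exists_polynomial_near_continuousMap 0 1 f₀ δ hδ
  have hpb' : ∀ y ∈ Icc (0:ℝ) 1, |p.eval y - h y| ≤ δ := by
    intro y hy
    have h1 := ContinuousMap.norm_coe_le_norm (p.toContinuousMapOn (Icc 0 1) - f₀) ⟨y, hy⟩
    have h2 : (p.toContinuousMapOn (Icc 0 1) - f₀) ⟨y, hy⟩ = p.eval y - h y := by
      simp [hf₀_def, Set.restrict]
    rw [h2, Real.norm_eq_abs] at h1
    exact le_of_lt (lt_of_le_of_lt h1 hp)
  set n : ℕ := p.natDegree with hn_def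
  have key : ∀ x ∈ Ioi (0:ℝ), Polynomial.eval (Real.exp (-x)) p * (1 - Real.exp (-x))
      = ∑ k ∈ Finset.range (n+1),
          p.coeff k * (Real.exp (-((k:ℝ)*x)) * (1 - Real.exp (-x))) := by
    intro x _
    rw [Polynomial.eval_eq_sum_range, Finset.sum_mul]
    refine Finset.sum_congr rfl (fun k _ => ?_)
    rw [show -((k:ℝ)*x) = (k:ℝ)*(-x) by ring, Real.exp_nat_mul]
    ring
  -- general bound for any measure with given transform
  have hgen : ∀ (μ : Measure ℝ) (G : ℝ → ℝ), (∀ l : ℝ, 0 ≤ l → 0 ≤ G l) →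
      (∀ l : ℝ, 0 ≤ l →
        ∫⁻ x in Ioi (0:ℝ), ENNReal.ofReal (1 - Real.exp (-(l * x))) ∂μ
          = ENNReal.ofReal (G l)) →
      |(∫ x in Ioi (0:ℝ), φ x ∂μ)
          - ∑ k ∈ Finset.range (n+1), p.coeff k * (G ((k:ℝ)+1) - G (k:ℝ))|
        ≤ δ * (G 1 - G 0) := by
    intro μ G hG0 hG
    have mres := fun k => my_moments μ G hG0 hG k
    have hfin : ∫⁻ x in Ioi (0:ℝ), ENNReal.ofReal (1 - Real.exp (-x)) ∂μ
        = ENNReal.ofReal (G 1) := by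
      have := hG 1 zero_le_one
      simpa using this
    have hφint : IntegrableOn φ (Ioi 0) μ :=
      my_integrable_of_bound μ (G 1) hfin φ hφc C hC0 hpb
    have hsumint : IntegrableOn (fun x => ∑ k ∈ Finset.range (n+1),
        p.coeff k * (Real.exp (-((k:ℝ)*x)) * (1 - Real.exp (-x)))) (Ioi 0) μ :=
      integrable_finset_sum _ (fun k _ => ((mres k).1.const_mul _))
    have hqint : IntegrableOn
        (fun x => Polynomial.eval (Real.exp (-x)) p * (1 - Real.exp (-x))) (Ioi 0) μ :=
      hsumint.congr_fun (fun x hx => (key x hx).symm) measurableSet_Ioi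
    have hP : (∫ x in Ioi (0:ℝ), Polynomial.eval (Real.exp (-x)) p * (1 - Real.exp (-x)) ∂μ)
        = ∑ k ∈ Finset.range (n+1), p.coeff k * (G ((k:ℝ)+1) - G (k:ℝ)) := by
      rw [setIntegral_congr_fun measurableSet_Ioi key, integral_finset_sum _
        (fun k _ => ((mres k).1.const_mul _))]
      refine Finset.sum_congr rfl (fun k _ => ?_)
      rw [integral_const_mul, (mres k).2]
    rw [← hP, ← integral_sub hφint hqint]
    have hmaj : IntegrableOn
        (fun x => δ * (Real.exp (-(((0:ℕ):ℝ) * x)) * (1 - Real.exp (-x)))) (Ioi 0) μ :=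
      (mres 0).1.const_mul δ
    have hae : ∀ᵐ x ∂(μ.restrict (Ioi 0)),
        ‖φ x - Polynomial.eval (Real.exp (-x)) p * (1 - Real.exp (-x))‖
          ≤ δ * (Real.exp (-(((0:ℕ):ℝ) * x)) * (1 - Real.exp (-x))) := by
      filter_upwards [ae_restrict_mem measurableSet_Ioi] with x hx
      have h1 : 0 ≤ 1 - Real.exp (-x) := by
        have hx0 : (0:ℝ) < x := hx
        have := Real.exp_le_one_iff.mpr (show -x ≤ 0 by linarith); linarith
      rw [Real.norm_eq_abs, h_id x hx,
        show h (Real.exp (-x)) * (1 - Real.exp (-x))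
            - Polynomial.eval (Real.exp (-x)) p * (1 - Real.exp (-x))
          = (h (Real.exp (-x)) - Polynomial.eval (Real.exp (-x)) p) * (1 - Real.exp (-x))
          by ring,
        abs_mul, abs_of_nonneg h1]
      have h2 : |h (Real.exp (-x)) - Polynomial.eval (Real.exp (-x)) p| ≤ δ := by
        rw [abs_sub_comm]; exact hpb' _ (hmemIcc x hx)
      have := mul_le_mul_of_nonneg_right h2 h1
      simpa using this
    have habs := norm_integral_le_of_norm_le hmaj hae
    refine le_trans ((Real.norm_eq_abs _) ▸ habs) ?_
    rw [integral_const_mul, (mres 0).2]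
    simp
  -- convergence of polynomial moments
  set L : ℝ := ∑ k ∈ Finset.range (n+1),
      p.coeff k * (Real.sqrt ((k:ℝ)+1) - Real.sqrt (k:ℝ)) with hL_def
  have hBr : ∀ r : ℝ, 0 ≤ r →
      Tendsto (fun t => Real.sqrt r * Real.tanh (Real.sqrt r * t)) atTop
        (nhds (Real.sqrt r)) := by
    intro r hr
    rcases eq_or_lt_of_le hr with rfl | hr
    · simp [Real.sqrt_zero]
    · have h1 : Tendsto (fun t : ℝ => Real.sqrt r * t) atTop atTop :=
        tendsto_id.const_mul_atTop (Real.sqrt_pos.mpr hr)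
      have h2 := (my_tendsto_tanh.comp h1).const_mul (Real.sqrt r)
      simpa using h2
  have hS : Tendsto (fun t => ∑ k ∈ Finset.range (n+1),
      p.coeff k * (Real.sqrt ((k:ℝ)+1) * Real.tanh (Real.sqrt ((k:ℝ)+1) * t)
        - Real.sqrt (k:ℝ) * Real.tanh (Real.sqrt (k:ℝ) * t))) atTop (nhds L) := by
    rw [hL_def]
    refine tendsto_finset_sum _ (fun k _ => ?_)
    exact ((hBr ((k:ℝ)+1) (by positivity)).sub (hBr (k:ℝ) (Nat.cast_nonneg k))).const_mul _
  -- identify the limit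
  have hTmu : (1 / (2 * Real.sqrt π) * ∫ x in Ioi (0:ℝ), φ x * x ^ (-(3:ℝ) / 2))
      = ∫ x in Ioi (0:ℝ), φ x ∂myMu := by
    rw [myMu_integral φ]
    have : (fun x => ((2 * Real.sqrt π)⁻¹ * x ^ (-(3:ℝ)/2)) * φ x)
        = fun x => (2 * Real.sqrt π)⁻¹ * (φ x * x ^ (-(3:ℝ)/2)) := by
      funext x; ring
    rw [this, integral_const_mul, one_div]
  have hMuBound := hgen myMu Real.sqrt (fun l _ => Real.sqrt_nonneg l) myMu_bernstein
  -- finish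
  filter_upwards [eventually_gt_atTop (0:ℝ), Metric.tendsto_nhds.mp hS δ hδ] with t ht hst
  have hFt := hgen (f t)
    (fun l => Real.sqrt l * Real.tanh (Real.sqrt l * t)) (hGt0 t ht) (hGt t ht)
  have hFt' : |(∫ x in Ioi (0:ℝ), φ x ∂(f t))
      - ∑ k ∈ Finset.range (n+1),
        p.coeff k * (Real.sqrt ((k:ℝ)+1) * Real.tanh (Real.sqrt ((k:ℝ)+1) * t)
          - Real.sqrt (k:ℝ) * Real.tanh (Real.sqrt (k:ℝ) * t))| ≤ δ := by
    refine le_trans hFt ?_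
    have h1 : Real.sqrt 1 * Real.tanh (Real.sqrt 1 * t)
        - Real.sqrt 0 * Real.tanh (Real.sqrt 0 * t) = Real.tanh t := by
      simp
    rw [h1]
    calc δ * Real.tanh t ≤ δ * 1 :=
          mul_le_mul_of_nonneg_left (my_tanh_le_one t) hδ.le
      _ = δ := mul_one δ
  have hMu' : |(∫ x in Ioi (0:ℝ), φ x ∂myMu) - L| ≤ δ := by
    refine le_trans hMuBound ?_
    simp
  rw [Real.dist_eq] at hst ⊢
  rw [hTmu]
  have h4 : |L - ∫ x in Ioi (0:ℝ), φ x ∂myMu| ≤ δ := by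
    rw [abs_sub_comm]; exact hMu'
  have t1 := abs_sub_le (∫ x in Ioi (0:ℝ), φ x ∂(f t))
    (∑ k ∈ Finset.range (n+1),
        p.coeff k * (Real.sqrt ((k:ℝ)+1) * Real.tanh (Real.sqrt ((k:ℝ)+1) * t)
          - Real.sqrt (k:ℝ) * Real.tanh (Real.sqrt (k:ℝ) * t)))
    (∫ x in Ioi (0:ℝ), φ x ∂myMu)
  have t2 := abs_sub_le (∑ k ∈ Finset.range (n+1),
        p.coeff k * (Real.sqrt ((k:ℝ)+1) * Real.tanh (Real.sqrt ((k:ℝ)+1) * t)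
          - Real.sqrt (k:ℝ) * Real.tanh (Real.sqrt (k:ℝ) * t)))
    L (∫ x in Ioi (0:ℝ), φ x ∂myMu)
  have hlt : δ + δ + δ < ε := by rw [hδ_def]; linarith
  linarith
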